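/- Let (M, dist) be a metric space with doubling constant λ, i.e., for every x ∈ M and every r > 0 the closed ball b(x, r) can be covered by at most λ closed balls of radius r/2 centered at points of M. Let p = p_1, …, p_m be a curve of complexity m in M and let r > 0. Then there exists a set S of at most (4λ)^m curves of complexity m in M such that the discrete Fréchet ball { q ∈ M^m : d_dF(p, q) ≤ r } is contained in the union over c ∈ S of the discrete Fréchet balls { q ∈ M^m : d_dF(c, q) ≤ r/2 }. -/

import Mathlib

/-- One step of a traversal: each index advances by `0` or `1`,
and at least one of the two indices advances. -/
def FrechetStep (a b : ℕ × ℕ) : Prop :=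
  (b.1 = a.1 ∨ b.1 = a.1 + 1) ∧ (b.2 = a.2 ∨ b.2 = a.2 + 1) ∧ a.1 + a.2 < b.1 + b.2

/-- `T` is a traversal of two curves with `m` resp. `k` vertices.  Indices are
`0`-based: the vertices of the first curve are indexed `0, …, m-1` and those of
the second curve `0, …, k-1`. -/
def IsTraversal (m k : ℕ) (T : List (ℕ × ℕ)) : Prop :=
  T ≠ [] ∧ T.head? = some (0, 0) ∧ T.getLast? = some (m - 1, k - 1) ∧
    T.Chain' FrechetStep

/-- The cost of a traversal `T` of the curves `p` and `q`: the maximum of the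
pairwise distances of points paired by `T`. -/
noncomputable def travCost {M : Type*} [MetricSpace M] (p q : ℕ → M)
    (T : List (ℕ × ℕ)) : ℝ :=
  (T.map fun ij => dist (p ij.1) (q ij.2)).foldr max 0

/-- The discrete Fréchet distance between the curve with the `m` vertices
`p 0, …, p (m-1)` and the curve with the `k` vertices `q 0, …, q (k-1)`:
the minimum cost of a traversal of the two curves. -/
noncomputable def discreteFrechet {M : Type*} [MetricSpace M]
    (m : ℕ) (p : ℕ → M) (k : ℕ) (q : ℕ → M) : ℝ :=
  sInf (travCost p q '' {T | IsTraversal m k T})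

/-- A metric space `M` has doubling constant `lam` if every closed ball
`b(x, r)` can be covered by at most `lam` closed balls of radius `r / 2`
centered at points of `M`. -/
def IsDoublingWith (M : Type*) [MetricSpace M] (lam : ℕ) : Prop :=
  ∀ (x : M) (r : ℝ), 0 < r → ∃ S : Finset M, S.card ≤ lam ∧
    Metric.closedBall x r ⊆ ⋃ c ∈ S, Metric.closedBall c (r / 2)

lemma foldr_max_nonneg (l : List ℝ) : 0 ≤ l.foldr max 0 := by
  induction l with
  | nil => simp
  | cons a l ih => simp only [List.foldr_cons]; exact le_max_of_le_right ih

lemma le_foldr_max {l : List ℝ} {a : ℝ} (ha : a ∈ l) : a ≤ l.foldr max 0 := by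
  induction l with
  | nil => simp at ha
  | cons b l ih =>
    simp only [List.foldr_cons]
    rcases List.mem_cons.1 ha with rfl | ha
    · exact le_max_left _ _
    · exact le_max_of_le_right (ih ha)

lemma foldr_max_le {l : List ℝ} {s : ℝ} (hs : 0 ≤ s) (h : ∀ a ∈ l, a ≤ s) :
    l.foldr max 0 ≤ s := by
  induction l with
  | nil => simpa
  | cons b l ih =>
    simp only [List.foldr_cons]
    exact max_le (h b (by simp)) (ih fun a ha => h a (List.mem_cons_of_mem _ ha))

lemma travCost_nonneg {M : Type*} [MetricSpace M] (p q : ℕ → M) (T : List (ℕ × ℕ)) :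
    0 ≤ travCost p q T := foldr_max_nonneg _

lemma dist_le_travCost {M : Type*} [MetricSpace M] (p q : ℕ → M) {T : List (ℕ × ℕ)}
    {i j : ℕ} (hij : (i, j) ∈ T) : dist (p i) (q j) ≤ travCost p q T :=
  le_foldr_max (by exact List.mem_map_of_mem hij)

lemma travCost_le {M : Type*} [MetricSpace M] (p q : ℕ → M) {T : List (ℕ × ℕ)}
    {s : ℝ} (hs : 0 ≤ s) (h : ∀ x ∈ T, dist (p x.1) (q x.2) ≤ s) :
    travCost p q T ≤ s := by
  refine foldr_max_le hs ?_
  intro a ha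
  obtain ⟨x, hx, rfl⟩ := List.mem_map.1 ha
  exact h x hx

/-- the diagonal traversal -/
lemma diag_traversal {m : ℕ} (hm : 1 ≤ m) :
    IsTraversal m m ((List.range m).map fun j => (j, j)) := by
  obtain ⟨n, rfl⟩ : ∃ n, m = n + 1 := ⟨m - 1, by omega⟩
  refine ⟨by simp [List.range_succ_eq_map], ?_, ?_, ?_⟩
  · rw [List.head?_eq_getElem?]
    simp [List.getElem?_eq_getElem, Nat.succ_pos]
  · rw [List.getLast?_eq_getElem?]
    simp [List.getElem?_eq_getElem, Nat.succ_pos]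
  · show List.IsChain _ _
    rw [List.isChain_map]
    rw [List.isChain_range_succ]
    intro i _
    exact ⟨Or.inr rfl, Or.inr rfl, by omega⟩

lemma discreteFrechet_le_of_pointwise {M : Type*} [MetricSpace M] {m : ℕ} (hm : 1 ≤ m)
    (c q : ℕ → M) {s : ℝ} (hs : 0 ≤ s) (hpt : ∀ j < m, dist (c j) (q j) ≤ s) :
    discreteFrechet m c m q ≤ s := by
  have hT := diag_traversal hm
  have hmem : travCost c q ((List.range m).map fun j => (j, j)) ∈
      travCost c q '' {T | IsTraversal m m T} := ⟨_, hT, rfl⟩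
  refine le_trans (csInf_le ⟨0, ?_⟩ hmem) ?_
  · rintro x ⟨T, -, rfl⟩; exact travCost_nonneg _ _ _
  · refine travCost_le _ _ hs ?_
    intro x hx
    obtain ⟨j, hj, rfl⟩ := List.mem_map.1 hx
    exact hpt j (List.mem_range.1 hj)

section TravStruct

variable {m : ℕ} {T : List (ℕ × ℕ)}

lemma trav_step (hT : IsTraversal m m T) {u : ℕ} (hu : u + 1 < T.length) :
    FrechetStep (T.getD u (0,0)) (T.getD (u+1) (0,0)) := by
  have h := List.isChain_iff_getElem.1 hT.2.2.2 u (by omega)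
  rwa [List.getD_eq_getElem _ _ (by omega : u < T.length), List.getD_eq_getElem _ _ hu]

lemma trav_len_pos (hT : IsTraversal m m T) : 0 < T.length :=
  List.length_pos_iff.2 hT.1

lemma trav_g0 (hT : IsTraversal m m T) : T.getD 0 (0,0) = (0,0) := by
  have h := hT.2.1
  rw [List.head?_eq_getElem?] at h
  rw [List.getD_eq_getElem _ _ (trav_len_pos hT)]
  rw [List.getElem?_eq_getElem (trav_len_pos hT)] at h
  exact Option.some_injective _ h

lemma trav_glast (hT : IsTraversal m m T) :
    T.getD (T.length - 1) (0,0) = (m-1, m-1) := by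
  have h := hT.2.2.1
  rw [List.getLast?_eq_getElem?] at h
  have hl : T.length - 1 < T.length := by have := trav_len_pos hT; omega
  rw [List.getD_eq_getElem _ _ hl]
  rw [List.getElem?_eq_getElem hl] at h
  exact Option.some_injective _ h

lemma trav_mono (hT : IsTraversal m m T) {u v : ℕ} (huv : u ≤ v) (hv : v < T.length) :
    (T.getD u (0,0)).1 ≤ (T.getD v (0,0)).1 ∧ (T.getD u (0,0)).2 ≤ (T.getD v (0,0)).2 := by
  induction v with
  | zero => have : u = 0 := by omega
            subst this; exact ⟨le_rfl, le_rfl⟩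
  | succ v ih =>
    rcases Nat.eq_or_lt_of_le huv with rfl | hlt
    · exact ⟨le_rfl, le_rfl⟩
    · have h1 := ih (by omega) (by omega)
      obtain ⟨ha, hb, -⟩ := trav_step hT hv
      constructor
      · rcases ha with h | h <;> omega
      · rcases hb with h | h <;> omega

lemma trav_sum_grow (hT : IsTraversal m m T) {u : ℕ} (hu : u < T.length) :
    u ≤ (T.getD u (0,0)).1 + (T.getD u (0,0)).2 := by
  induction u with
  | zero => omega
  | succ u ih =>
    have h1 := ih (by omega)
    have h2 := (trav_step hT hu).2.2
    omega

lemma trav_length_le (hm : 1 ≤ m) (hT : IsTraversal m m T) : T.length ≤ 2 * m - 1 := by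
  have h := trav_sum_grow hT (u := T.length - 1) (by have := trav_len_pos hT; omega)
  rw [trav_glast hT] at h
  simp only at h
  have := trav_len_pos hT
  omega

lemma trav_mem_bound (hm : 1 ≤ m) (hT : IsTraversal m m T) :
    ∀ x ∈ T, x.1 < m ∧ x.2 < m := by
  intro x hx
  obtain ⟨u, hu, rfl⟩ := List.getElem_of_mem hx
  have hmono := trav_mono hT (u := u) (v := T.length - 1)
    (by omega) (by have := trav_len_pos hT; omega)
  rw [trav_glast hT, List.getD_eq_getElem _ _ hu] at hmono
  simp only at hmono
  omega

/-- discrete intermediate value theorem for the second coordinate -/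
lemma trav_ivt (hT : IsTraversal m m T) {v j : ℕ} (hv : v < T.length)
    (hj : j ≤ (T.getD v (0,0)).2) : ∃ u ≤ v, (T.getD u (0,0)).2 = j := by
  induction v with
  | zero =>
    have h0 : (T.getD 0 (0,0)).2 = 0 := by rw [trav_g0 hT]
    exact ⟨0, le_rfl, by omega⟩
  | succ v ih =>
    by_cases hcase : j ≤ (T.getD v (0,0)).2
    · obtain ⟨u, hu, he⟩ := ih (by omega) hcase
      exact ⟨u, by omega, he⟩
    · have hstep := (trav_step hT hv).2.1
      exact ⟨v + 1, le_rfl, by omega⟩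

/-- selection: monotone row-choice function from a traversal -/
lemma trav_selection (hm : 1 ≤ m) (hT : IsTraversal m m T) :
    ∃ f : ℕ → ℕ, f 0 = 0 ∧ (∀ ⦃j j'⦄, j ≤ j' → j' ≤ m - 1 → f j ≤ f j') ∧
      f (m-1) ≤ m - 1 ∧ ∀ j < m, (f j, j) ∈ T := by
  classical
  have hlp := trav_len_pos hT
  have hivtmin : ∀ j, j ≤ m - 1 → ∃ u, ((T.getD u (0,0)).2 = j ∧ u < T.length) ∧
      ∀ u' < u, (T.getD u' (0,0)).2 ≠ j := by
    intro j hj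
    have hlast2 : (T.getD (T.length - 1) (0,0)).2 = m - 1 := by rw [trav_glast hT]
    obtain ⟨u, hu1, hu2⟩ := trav_ivt hT (v := T.length - 1) (j := j) (by omega) (by omega)
    have hex : ∃ u, (T.getD u (0,0)).2 = j ∧ u < T.length := ⟨u, hu2, by omega⟩
    refine ⟨Nat.find hex, Nat.find_spec hex, fun u' hu' hval => ?_⟩
    have hle : Nat.find hex ≤ u' :=
      Nat.find_le ⟨hval, by have := (Nat.find_spec hex).2; omega⟩
    omega
  choose U hU1 hU2 using hivtmin
  refine ⟨fun j => if h : j ≤ m - 1 then (T.getD (U j h) (0,0)).1 else 0, ?_, ?_, ?_, ?_⟩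
  · -- f 0 = 0
    have h0 : (0:ℕ) ≤ m - 1 := Nat.zero_le _
    have hU0 : U 0 h0 = 0 := by
      by_contra hne
      exact hU2 0 h0 0 (by omega) (by rw [trav_g0 hT])
    simp only [dif_pos h0, hU0, trav_g0 hT]
  · -- monotone
    intro j j' hjj hj'
    have hj : j ≤ m - 1 := le_trans hjj hj'
    simp only [dif_pos hj, dif_pos hj']
    have hval' : (T.getD (U j' hj') (0,0)).2 = j' := (hU1 j' hj').1
    obtain ⟨u, huU, hval⟩ := trav_ivt hT (v := U j' hj') (j := j) (hU1 j' hj').2 (by omega)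
    have hge : U j hj ≤ u := by
      by_contra hlt
      exact hU2 j hj u (by omega) hval
    exact (trav_mono hT (le_trans hge huU) (hU1 j' hj').2).1
  · -- f (m-1) ≤ m - 1
    simp only [dif_pos (le_refl (m-1))]
    have := (trav_mono hT (u := U (m-1) le_rfl) (v := T.length - 1)
      (by have := (hU1 (m-1) le_rfl).2; omega) (by omega)).1
    rw [trav_glast hT] at this
    exact this
  · -- membership
    intro j hj
    have hjm : j ≤ m - 1 := by omega
    simp only [dif_pos hjm]
    have hval := (hU1 j hjm).1
    have hu := (hU1 j hjm).2
    have hmem : T.getD (U j hjm) (0,0) ∈ T := by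
      rw [List.getD_eq_getElem _ _ hu]; exact List.getElem_mem _
    set x := T.getD (U j hjm) (0,0) with hx
    rw [← hval, Prod.mk.eta]
    exact hmem


/-- the set of traversals is finite -/
lemma trav_finite (hm : 1 ≤ m) : {T : List (ℕ × ℕ) | IsTraversal m m T}.Finite := by
  have hfin : {l : List (Fin m × Fin m) | l.length ≤ 2 * m - 1}.Finite :=
    List.finite_length_le _ _
  refine Set.Finite.subset (hfin.image fun l => l.map fun x => (x.1.val, x.2.val)) ?_
  intro T hT
  have hb := trav_mem_bound hm hT
  refine ⟨T.pmap (fun x hx => ((⟨x.1, hx.1⟩ : Fin m), (⟨x.2, hx.2⟩ : Fin m))) hb, ?_, ?_⟩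
  · simp only [Set.mem_setOf_eq, List.length_pmap]
    exact trav_length_le hm hT
  · show List.map (fun x : Fin m × Fin m => (x.1.val, x.2.val)) _ = T
    rw [List.map_pmap]
    have : ∀ (x : ℕ × ℕ) (h : x.1 < m ∧ x.2 < m),
        ((((⟨x.1, h.1⟩ : Fin m), (⟨x.2, h.2⟩ : Fin m)).1.val,
          (((⟨x.1, h.1⟩ : Fin m), (⟨x.2, h.2⟩ : Fin m))).2.val)) = x := fun x h => rfl
    simp only [this]
    exact (List.pmap_eq_map (f := id) hb).trans (List.map_id T)

lemma exists_min_traversal {M : Type*} [MetricSpace M] {m : ℕ} (hm : 1 ≤ m)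
    (p q : ℕ → M) {r : ℝ} (hle : discreteFrechet m p m q ≤ r) :
    ∃ T, IsTraversal m m T ∧ travCost p q T ≤ r := by
  have hne : (travCost p q '' {T | IsTraversal m m T}).Nonempty :=
    ⟨_, _, diag_traversal hm, rfl⟩
  have hfin : (travCost p q '' {T | IsTraversal m m T}).Finite :=
    (trav_finite hm).image _
  obtain ⟨T, hT, hval⟩ := hne.csInf_mem hfin
  exact ⟨T, hT, by rw [hval]; exact hle⟩

end TravStruct

/-- decoder from a finset to a monotone function -/
noncomputable def fdec (A : Finset ℕ) (j : ℕ) : ℕ :=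
  ((insert 0 A).sort (· ≤ ·)).getD j 0 - j

lemma fdec_encode {m : ℕ} (hm : 1 ≤ m) (f : ℕ → ℕ) (h0 : f 0 = 0)
    (hmono : ∀ ⦃j j'⦄, j ≤ j' → j' ≤ m - 1 → f j ≤ f j') (hlast : f (m-1) ≤ m-1) :
    ∃ A ∈ (Finset.Icc 1 (2*m-2)).powerset, ∀ j < m, fdec A j = f j := by
  classical
  refine ⟨Finset.image (fun j => f j + j) (Finset.Icc 1 (m-1)), ?_, ?_⟩
  · rw [Finset.mem_powerset]
    intro x hx
    obtain ⟨j, hj, rfl⟩ := Finset.mem_image.1 hx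
    rw [Finset.mem_Icc] at hj ⊢
    have h1 : f j ≤ f (m-1) := hmono hj.2 le_rfl
    omega
  · -- the sorted list of `insert 0 A` is exactly `L`
    have hpair : ((List.range m).map fun j => f j + j).Pairwise (· < ·) := by
      rw [List.pairwise_map]
      refine (List.pairwise_lt_range (n := m)).imp_of_mem ?_
      intro a b ha hb hab
      rw [List.mem_range] at ha hb
      have : f a ≤ f b := hmono (le_of_lt hab) (by omega)
      omega
    have hnodup : ((List.range m).map fun j => f j + j).Nodup :=
      hpair.imp ne_of_lt
    have htofin : ((List.range m).map fun j => f j + j).toFinset =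
        insert 0 (Finset.image (fun j => f j + j) (Finset.Icc 1 (m-1))) := by
      ext x
      simp only [List.mem_toFinset, List.mem_map, List.mem_range, Finset.mem_insert,
        Finset.mem_image, Finset.mem_Icc]
      constructor
      · rintro ⟨j, hj, rfl⟩
        rcases Nat.eq_zero_or_pos j with rfl | hpos
        · left; omega
        · right; exact ⟨j, ⟨hpos, by omega⟩, rfl⟩
      · rintro (rfl | ⟨j, hj, rfl⟩)
        · exact ⟨0, by omega, by omega⟩
        · exact ⟨j, by omega, rfl⟩
    have hsort : (insert 0 (Finset.image (fun j => f j + j) (Finset.Icc 1 (m-1)))).sort (· ≤ ·)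
        = (List.range m).map fun j => f j + j := by
      rw [← htofin]
      exact (List.toFinset_sort _ hnodup).2 (hpair.imp le_of_lt)
    intro j hj
    unfold fdec
    rw [hsort]
    have hlen : j < ((List.range m).map fun j => f j + j).length := by
      simpa using hj
    rw [List.getD_eq_getElem _ _ hlen]
    simp

/-- **Theorem 22 of the paper: doubling dimension of the discrete
Fréchet distance.** In a metric space with doubling constant `lam`, for every
curve `p` of complexity `m` and every `r > 0`, the discrete Fréchet ball of
radius `r` around `p` (among curves of complexity `m`) can be covered by at
most `(4·lam)^m` discrete Fréchet balls of radius `r/2` (around curves of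
complexity `m`). -/
theorem frechet_ball_doubling {M : Type*} [MetricSpace M] (lam : ℕ)
    (h : IsDoublingWith M lam) (m : ℕ) (hm : 1 ≤ m) (p : ℕ → M) (r : ℝ)
    (hr : 0 < r) :
    ∃ S : Finset (ℕ → M), S.card ≤ (4 * lam) ^ m ∧
      ∀ q : ℕ → M, discreteFrechet m p m q ≤ r →
        ∃ c ∈ S, discreteFrechet m c m q ≤ r / 2 := by
  classical
  rcases isEmpty_or_nonempty M with hM | hM
  · exact ⟨∅, by simp, fun q _ => (IsEmpty.false (q 0)).elim⟩
  obtain ⟨x₀⟩ := hM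
  have hlam : 1 ≤ lam := by
    obtain ⟨Cb, hC1, hC2⟩ := h x₀ r hr
    by_contra hcon
    have hCb : Cb = ∅ := Finset.card_eq_zero.1 (by omega)
    have hx : x₀ ∈ Metric.closedBall x₀ r := Metric.mem_closedBall_self hr.le
    have := hC2 hx
    rw [hCb] at this
    simp at this
  choose C hC1 hC2 using fun i : ℕ => h (p i) r hr
  set dec : Finset ℕ × (Fin m → Fin lam) → (ℕ → M) := fun Ak j =>
    if hj : j < m then (C (fdec Ak.1 j)).toList.getD (Ak.2 ⟨j, hj⟩) x₀ else x₀ with hdec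
  refine ⟨Finset.image dec ((Finset.Icc 1 (2*m-2)).powerset ×ˢ
    (Finset.univ : Finset (Fin m → Fin lam))), ?_, ?_⟩
  · refine le_trans Finset.card_image_le ?_
    rw [Finset.card_product, Finset.card_powerset, Nat.card_Icc]
    have hcard : (Finset.univ : Finset (Fin m → Fin lam)).card = lam ^ m := by
      rw [Finset.card_univ, Fintype.card_fun]
      simp
    rw [hcard]
    calc 2 ^ (2*m-2+1-1) * lam ^ m ≤ 2 ^ (2*m) * lam ^ m :=
          Nat.mul_le_mul_right _ (Nat.pow_le_pow_right (by norm_num) (by omega))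
      _ = (4 * lam) ^ m := by
          rw [mul_pow, show (4:ℕ) = 2^2 from rfl, ← pow_mul]
  · intro q hq
    obtain ⟨T, hT, hcost⟩ := exists_min_traversal hm p q hq
    obtain ⟨f, hf0, hfmono, hflast, hfmem⟩ := trav_selection hm hT
    obtain ⟨A, hA, hAdec⟩ := fdec_encode hm f hf0 hfmono hflast
    have hcent : ∀ j : Fin m, ∃ κ : Fin lam,
        dist ((C (f j.val)).toList.getD κ x₀) (q j.val) ≤ r / 2 := by
      intro j
      have hdist : dist (p (f j.val)) (q j.val) ≤ r :=
        le_trans (dist_le_travCost p q (hfmem j.val j.2)) hcost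
      have hmem : q j.val ∈ Metric.closedBall (p (f j.val)) r := by
        rw [Metric.mem_closedBall, dist_comm]; exact hdist
      have hun := hC2 (f j.val) hmem
      simp only [Set.mem_iUnion, exists_prop] at hun
      obtain ⟨c, hcC, hqc⟩ := hun
      obtain ⟨n, hn, hget⟩ := List.getElem_of_mem (Finset.mem_toList.2 hcC)
      have hnl : n < lam := by
        have := hC1 (f j.val)
        rw [Finset.length_toList] at hn
        omega
      refine ⟨⟨n, hnl⟩, ?_⟩
      rw [show ((⟨n, hnl⟩ : Fin lam) : ℕ) = n from rfl,
        List.getD_eq_getElem _ _ (by rw [Finset.length_toList]; rw [Finset.length_toList] at hn; exact hn),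
        hget, dist_comm]
      simpa [Metric.mem_closedBall] using hqc
    choose κ hκ using hcent
    refine ⟨dec (A, κ), Finset.mem_image_of_mem _
      (Finset.mem_product.2 ⟨hA, Finset.mem_univ _⟩), ?_⟩
    refine discreteFrechet_le_of_pointwise hm _ _ (by positivity) ?_
    intro j hj
    have hde : dec (A, κ) j = (C (fdec A j)).toList.getD (κ ⟨j, hj⟩) x₀ := by
      rw [hdec]; simp only [dif_pos hj]
    rw [hde, hAdec j hj]
    exact hκ ⟨j, hj⟩
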